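/- In the setting L(a) = min(c₁/a + k₁, c₂/a + k₂) + γa with c₁ > c₂ ≥ 0, k₂ > k₁ ≥ 0, γ > 0, if the switching point a₀ = (c₁ − c₂)/(k₂ − k₁) satisfies sqrt(c₂/γ) < a₀ < sqrt(c₁/γ) is false — i.e., either a₀ ≤ sqrt(c₂/γ) or a₀ ≥ sqrt(c₁/γ) — then the minimizer of L over (0, ∞) is attained at an interior point of one of the two branches (namely sqrt(c₁/γ) or sqrt(c₂/γ)) and not at a₀. -/

import Mathlib

lemma fdiff (c γ x y : ℝ) (hx : x ≠ 0) (hy : y ≠ 0) :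
    c/x + γ*x - (c/y + γ*y) = (x - y)*(γ*x*y - c)/(x*y) := by
  field_simp; ring

lemma amgm (c γ b : ℝ) (hc : 0 ≤ c) (hγ : 0 < γ) (hb : 0 < b) :
    2 * Real.sqrt (c*γ) ≤ c/b + γ*b := by
  have h1 : Real.sqrt (c*γ) = Real.sqrt c * Real.sqrt γ := Real.sqrt_mul hc γ
  have h2 : Real.sqrt c * Real.sqrt c = c := Real.mul_self_sqrt hc
  have h3 : Real.sqrt γ * Real.sqrt γ = γ := Real.mul_self_sqrt hγ.le
  have key : c/b + γ*b - 2 * Real.sqrt (c*γ) = (Real.sqrt c - Real.sqrt γ * b)^2 / b := by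
    field_simp
    linear_combination -h2 - b^2*h3 - 2*b*h1
  rw [← sub_nonneg, key]
  positivity

lemma eq_at_sqrt (c γ : ℝ) (hc : 0 ≤ c) (hγ : 0 < γ) :
    c / Real.sqrt (c/γ) + γ * Real.sqrt (c/γ) = 2 * Real.sqrt (c*γ) := by
  rcases eq_or_lt_of_le hc with h | h
  · simp [← h]
  · have hs : Real.sqrt (c/γ) = Real.sqrt c / Real.sqrt γ := Real.sqrt_div hc γ
    have h1 : Real.sqrt (c*γ) = Real.sqrt c * Real.sqrt γ := Real.sqrt_mul hc γ
    have h2 : Real.sqrt c * Real.sqrt c = c := Real.mul_self_sqrt hc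
    have h3 : Real.sqrt γ * Real.sqrt γ = γ := Real.mul_self_sqrt hγ.le
    have hc' : (0:ℝ) < Real.sqrt c := Real.sqrt_pos.mpr h
    have hγ' : (0:ℝ) < Real.sqrt γ := Real.sqrt_pos.mpr hγ
    rw [hs, h1]
    field_simp
    nlinarith [h2, h3]

lemma numlt (γ x y s c : ℝ) (hγ : 0 < γ) (h12 : x * y < s * s) (hs : c = γ * s ^ 2) :
    γ * x * y - c < 0 := by nlinarith [mul_lt_mul_of_pos_left h12 hγ]

lemma numgt (γ x y s c : ℝ) (hγ : 0 < γ) (h12 : s * s < x * y) (hs : c = γ * s ^ 2) :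
    0 < γ * x * y - c := by nlinarith [mul_lt_mul_of_pos_left h12 hγ]

theorem stmt_17 (c₁ c₂ k₁ k₂ γ : ℝ) (hc2 : 0 ≤ c₂) (hc : c₂ < c₁)
    (hk1 : 0 ≤ k₁) (hk : k₁ < k₂) (hγ : 0 < γ)
    (L : ℝ → ℝ) (hL : ∀ a, L a = min (c₁ / a + k₁) (c₂ / a + k₂) + γ * a)
    (a₀ : ℝ) (ha₀ : a₀ = (c₁ - c₂) / (k₂ - k₁))
    (hfail : a₀ ≤ Real.sqrt (c₂ / γ) ∨ Real.sqrt (c₁ / γ) ≤ a₀) :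
    ((∀ b, 0 < b → L (Real.sqrt (c₁ / γ)) ≤ L b) ∨
        (∀ b, 0 < b → L (Real.sqrt (c₂ / γ)) ≤ L b)) ∧
      ¬ (∀ b, 0 < b → L a₀ ≤ L b) := by
  set s₁ := Real.sqrt (c₁ / γ) with hs₁def
  set s₂ := Real.sqrt (c₂ / γ) with hs₂def
  have hc1 : (0:ℝ) < c₁ := lt_of_le_of_lt hc2 hc
  have hkk : (0:ℝ) < k₂ - k₁ := by linarith
  have hs₁pos : 0 < s₁ := Real.sqrt_pos.mpr (div_pos hc1 hγ)
  have hs₂nn : 0 ≤ s₂ := Real.sqrt_nonneg _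
  have hs₂lt : s₂ < s₁ := by
    apply Real.sqrt_lt_sqrt (by positivity)
    exact div_lt_div_of_pos_right hc hγ
  have ha₀pos : 0 < a₀ := by rw [ha₀]; exact div_pos (by linarith) hkk
  have hs₁sq : c₁ = γ * s₁ ^ 2 := by
    have := Real.sq_sqrt (show (0:ℝ) ≤ c₁ / γ by positivity)
    rw [hs₁def, this]; field_simp
  have hs₂sq : c₂ = γ * s₂ ^ 2 := by
    have := Real.sq_sqrt (show (0:ℝ) ≤ c₂ / γ by positivity)
    rw [hs₂def, this]; field_simp
  clear_value s₁ s₂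
  have hsw : c₁ - c₂ = (k₂ - k₁) * a₀ := by rw [ha₀]; field_simp
  have hswitch : c₁ / a₀ + k₁ = c₂ / a₀ + k₂ := by
    field_simp
    nlinarith [hsw]
  have hsplit : ∀ b : ℝ, b ≠ 0 → c₁ / b = c₂ / b + (c₁ - c₂) / b := by
    intro b hb; field_simp; ring
  have hbr1 : ∀ b, 0 < b → a₀ ≤ b → L b = c₁ / b + k₁ + γ * b := by
    intro b hb hab
    rw [hL b, min_eq_left]
    have h3 : (c₁ - c₂) / b ≤ k₂ - k₁ := by
      rw [div_le_iff₀ hb, hsw]; nlinarith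
    have h4 := hsplit b hb.ne'
    linarith
  have hbr2 : ∀ b, 0 < b → b ≤ a₀ → L b = c₂ / b + k₂ + γ * b := by
    intro b hb hab
    rw [hL b, min_eq_right]
    have h3 : k₂ - k₁ ≤ (c₁ - c₂) / b := by
      rw [le_div_iff₀ hb, hsw]; nlinarith
    have h4 := hsplit b hb.ne'
    linarith
  rcases hfail with hA | hB
  · -- a₀ ≤ s₂ : minimizer at s₁
    constructor
    · left
      intro b hb
      have hLs1 : L s₁ ≤ 2 * Real.sqrt (c₁ * γ) + k₁ := by
        rw [hL]
        have hm := min_le_left (c₁ / s₁ + k₁) (c₂ / s₁ + k₂)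
        have he := eq_at_sqrt c₁ γ hc1.le hγ
        rw [← hs₁def] at he
        linarith
      rcases le_or_gt a₀ b with hab | hab
      · rw [hbr1 b hb hab]
        linarith [amgm c₁ γ b hc1.le hγ hb]
      · rw [hbr2 b hb hab.le]
        have hd := fdiff c₂ γ b a₀ hb.ne' ha₀pos.ne'
        have h12 : b * a₀ < s₂ * s₂ :=
          mul_lt_mul (by linarith) hA ha₀pos (by linarith)
        have hnum : γ * b * a₀ - c₂ < 0 := numlt γ b a₀ s₂ c₂ hγ h12 hs₂sq
        have hge : 0 ≤ (b - a₀) * (γ * b * a₀ - c₂) / (b * a₀) :=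
          div_nonneg (mul_pos_of_neg_of_neg (by linarith) hnum).le
            (mul_pos hb ha₀pos).le
        have hag := amgm c₁ γ a₀ hc1.le hγ ha₀pos
        linarith
    · intro hmin
      have ha₀s₁ : a₀ < s₁ := lt_of_le_of_lt hA hs₂lt
      obtain ⟨b, hb, hab, hbs⟩ : ∃ b : ℝ, 0 < b ∧ a₀ < b ∧ b < s₁ :=
        ⟨(a₀ + s₁) / 2, by linarith, by linarith, by linarith⟩
      have hLb : L b ≤ c₁ / b + k₁ + γ * b := by
        rw [hL]; linarith [min_le_left (c₁ / b + k₁) (c₂ / b + k₂)]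
      have hLa : L a₀ = c₁ / a₀ + k₁ + γ * a₀ := hbr1 a₀ ha₀pos le_rfl
      have hd := fdiff c₁ γ a₀ b ha₀pos.ne' hb.ne'
      have h12 : a₀ * b < s₁ * s₁ :=
        mul_lt_mul ha₀s₁ hbs.le hb hs₁pos.le
      have hnum : γ * a₀ * b - c₁ < 0 := numlt γ a₀ b s₁ c₁ hγ h12 hs₁sq
      have hgt : 0 < (a₀ - b) * (γ * a₀ * b - c₁) / (a₀ * b) :=
        div_pos (mul_pos_of_neg_of_neg (by linarith) hnum) (mul_pos ha₀pos hb)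
      have := hmin b hb
      linarith
  · -- s₁ ≤ a₀ : minimizer at s₂
    have hs₂a : s₂ < a₀ := lt_of_lt_of_le hs₂lt hB
    constructor
    · right
      intro b hb
      have hLs2 : L s₂ ≤ 2 * Real.sqrt (c₂ * γ) + k₂ := by
        rw [hL]
        have hm := min_le_right (c₁ / s₂ + k₁) (c₂ / s₂ + k₂)
        have he := eq_at_sqrt c₂ γ hc2 hγ
        rw [← hs₂def] at he
        linarith
      rcases le_or_gt b a₀ with hab | hab
      · rw [hbr2 b hb hab]
        linarith [amgm c₂ γ b hc2 hγ hb]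
      · rw [hbr1 b hb hab.le]
        have hd := fdiff c₁ γ b a₀ hb.ne' ha₀pos.ne'
        have h12 : s₁ * s₁ < b * a₀ :=
          mul_lt_mul (by linarith) hB hs₁pos (by linarith)
        have hnum : 0 < γ * b * a₀ - c₁ := numgt γ b a₀ s₁ c₁ hγ h12 hs₁sq
        have hge : 0 ≤ (b - a₀) * (γ * b * a₀ - c₁) / (b * a₀) :=
          div_nonneg (mul_nonneg (by linarith) hnum.le) (mul_pos hb ha₀pos).le
        have hag := amgm c₂ γ a₀ hc2 hγ ha₀pos
        linarith
    · intro hmin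
      obtain ⟨b, hsb, hba⟩ : ∃ b : ℝ, s₂ < b ∧ b < a₀ :=
        ⟨(s₂ + a₀) / 2, by linarith, by linarith⟩
      have hb : 0 < b := lt_of_le_of_lt hs₂nn hsb
      have hLb : L b ≤ c₂ / b + k₂ + γ * b := by
        rw [hL]; linarith [min_le_right (c₁ / b + k₁) (c₂ / b + k₂)]
      have hLa : L a₀ = c₂ / a₀ + k₂ + γ * a₀ := hbr2 a₀ ha₀pos le_rfl
      have hd := fdiff c₂ γ a₀ b ha₀pos.ne' hb.ne'
      have h12 : s₂ * s₂ < a₀ * b := mul_lt_mul'' hs₂a hsb hs₂nn hs₂nn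
      have hnum : 0 < γ * a₀ * b - c₂ := numgt γ a₀ b s₂ c₂ hγ h12 hs₂sq
      have hgt : 0 < (a₀ - b) * (γ * a₀ * b - c₂) / (a₀ * b) :=
        div_pos (mul_pos (by linarith) hnum) (mul_pos ha₀pos hb)
      have := hmin b hb
      linarith
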